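/- The sum over all positive integers m of φ(m)/|GL₂(ℤ/mℤ)| equals the Euler product over all primes ℓ of (1 + ℓ²/((ℓ²−1)(ℓ³−1))), and this product converges. -/

import Mathlib

open Matrix

/-! Auxiliary material for `stmt_2`. -/

/-- Matrix ring over a product ring is the product of matrix rings. -/
def EP2.matrixProdEquiv (R S : Type*) [Semiring R] [Semiring S] (n : Type*) [Fintype n]
    [DecidableEq n] :
    Matrix n n (R × S) ≃+* Matrix n n R × Matrix n n S where
  toFun M := (M.map Prod.fst, M.map Prod.snd)
  invFun P := fun i j => (P.1 i j, P.2 i j)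
  left_inv M := by ext i j <;> rfl
  right_inv P := by ext i j <;> rfl
  map_add' M N := by constructor <;> · ext i j; rfl
  map_mul' M N := by
    refine Prod.ext ?_ ?_ <;>
    · ext i j
      show _ = _
      simp only [Matrix.map_apply, Matrix.mul_apply]
      first
      | exact map_sum (RingHom.fst R S) _ _
      | exact map_sum (RingHom.snd R S) _ _

lemma EP2.cardGL_mul {m n : ℕ} (h : Nat.Coprime m n) :
    Nat.card (GL (Fin 2) (ZMod (m * n))) =
      Nat.card (GL (Fin 2) (ZMod m)) * Nat.card (GL (Fin 2) (ZMod n)) := by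
  have e1 : ZMod (m * n) ≃+* ZMod m × ZMod n := ZMod.chineseRemainder h
  have e2 : Matrix (Fin 2) (Fin 2) (ZMod (m * n)) ≃+*
      Matrix (Fin 2) (Fin 2) (ZMod m) × Matrix (Fin 2) (Fin 2) (ZMod n) :=
    e1.mapMatrix.trans (EP2.matrixProdEquiv _ _ _)
  calc Nat.card (GL (Fin 2) (ZMod (m * n)))
      = Nat.card ((Matrix (Fin 2) (Fin 2) (ZMod m) × Matrix (Fin 2) (Fin 2) (ZMod n))ˣ) :=
        Nat.card_congr (Units.mapEquiv e2.toMulEquiv).toEquiv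
    _ = _ := by rw [Nat.card_congr (MulEquiv.prodUnits).toEquiv, Nat.card_prod]

lemma EP2.zmod_isUnit_iff {p k : ℕ} (hp : p.Prime) (hk : k ≠ 0) (x : ZMod (p ^ k)) :
    IsUnit x ↔ IsUnit (ZMod.castHom (dvd_pow_self p hk) (ZMod p) x) := by
  haveI : NeZero (p ^ k) := ⟨pow_ne_zero k hp.pos.ne'⟩
  have h2 : (ZMod.castHom (dvd_pow_self p hk) (ZMod p)) x = ((x.val : ℕ) : ZMod p) := by
    rw [ZMod.castHom_apply, ZMod.natCast_val]
  conv_lhs => rw [← ZMod.natCast_zmod_val x]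
  rw [h2, ZMod.isUnit_iff_coprime, ZMod.isUnit_iff_coprime,
    Nat.coprime_pow_right_iff (Nat.pos_of_ne_zero hk)]

lemma EP2.matrix_isUnit_iff {p k : ℕ} (hp : p.Prime) (hk : k ≠ 0)
    (M : Matrix (Fin 2) (Fin 2) (ZMod (p ^ k))) :
    IsUnit M ↔ IsUnit ((ZMod.castHom (dvd_pow_self p hk) (ZMod p)).mapMatrix M) := by
  rw [Matrix.isUnit_iff_isUnit_det, Matrix.isUnit_iff_isUnit_det,
    ← RingHom.map_det, ← EP2.zmod_isUnit_iff hp hk]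

lemma EP2.cardGL_primePow {p : ℕ} (hp : p.Prime) (k : ℕ) :
    Nat.card (GL (Fin 2) (ZMod (p ^ (k + 1)))) =
      p ^ (4 * k) * ((p ^ 2 - 1) * (p ^ 2 - p)) := by
  haveI : Fact p.Prime := ⟨hp⟩
  haveI : NeZero (p ^ (k + 1)) := ⟨pow_ne_zero _ hp.pos.ne'⟩
  have hk : k + 1 ≠ 0 := Nat.succ_ne_zero k
  set c := ZMod.castHom (dvd_pow_self p hk) (ZMod p) with hc
  set π := c.mapMatrix (m := Fin 2) with hπ
  set F : GL (Fin 2) (ZMod (p ^ (k + 1))) →* GL (Fin 2) (ZMod p) :=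
    Units.map (π : Matrix (Fin 2) (Fin 2) (ZMod (p ^ (k+1))) →* Matrix (Fin 2) (Fin 2) (ZMod p))
    with hF
  have hcsurj : Function.Surjective c := ZMod.ringHom_surjective c
  have hπsurj : Function.Surjective π := fun A => by
    refine ⟨Matrix.of fun i j => Classical.choose (hcsurj (A i j)), ?_⟩
    ext i j
    exact Classical.choose_spec (hcsurj (A i j))
  have hFsurj : Function.Surjective F := by
    intro u
    obtain ⟨M, hM⟩ := hπsurj (u : Matrix (Fin 2) (Fin 2) (ZMod p))
    have hMu : IsUnit M := (EP2.matrix_isUnit_iff hp hk M).mpr (by rw [← hπ, hM]; exact u.isUnit)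
    refine ⟨hMu.unit, Units.ext ?_⟩
    show π (hMu.unit : Matrix (Fin 2) (Fin 2) (ZMod (p ^ (k+1)))) = u
    rw [IsUnit.unit_spec, hM]
  -- kernel
  have e1 : F.ker ≃ { N : Matrix (Fin 2) (Fin 2) (ZMod (p ^ (k + 1))) // π N = 0 } := by
    refine
      { toFun := fun u => ⟨(u : GL (Fin 2) (ZMod (p ^ (k+1)))).val - 1, ?_⟩
        invFun := fun N => ⟨?_, ?_⟩
        left_inv := ?_, right_inv := ?_ }
    · have hu : π ((u : GL (Fin 2) (ZMod (p ^ (k+1)))).val) = 1 := by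
        have := u.2
        rw [MonoidHom.mem_ker] at this
        exact congrArg Units.val this
      rw [map_sub, _root_.map_one, hu, sub_self]
    · exact ((EP2.matrix_isUnit_iff hp hk (1 + N.1)).mpr
        (by rw [map_add, _root_.map_one, N.2, add_zero]; exact isUnit_one)).unit
    · rw [MonoidHom.mem_ker]
      refine Units.ext ?_
      show π _ = 1
      rw [IsUnit.unit_spec, map_add, _root_.map_one, N.2, add_zero]
    · intro u
      apply Subtype.ext
      apply Units.ext
      show _ = ((u : GL (Fin 2) (ZMod (p ^ (k+1)))) : Matrix (Fin 2) (Fin 2) (ZMod (p ^ (k+1))))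
      rw [IsUnit.unit_spec, add_sub_cancel]
    · intro N
      apply Subtype.ext
      show (_ : Matrix _ _ _) - 1 = N.1
      rw [IsUnit.unit_spec, add_sub_cancel_left]
  have e2 : { N : Matrix (Fin 2) (Fin 2) (ZMod (p ^ (k + 1))) // π N = 0 } ≃
      (Fin 2 → Fin 2 → { x : ZMod (p ^ (k + 1)) // c x = 0 }) :=
    { toFun := fun N i j => ⟨N.1 i j, by
        have := congrFun (congrFun
          (congrArg (fun M => (M : Matrix (Fin 2) (Fin 2) (ZMod p))) N.2) i) j
        exact this⟩
      invFun := fun g => ⟨Matrix.of fun i j => (g i j).1, by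
        ext i j; exact (g i j).2⟩
      left_inv := fun N => Subtype.ext rfl
      right_inv := fun g => rfl }
  -- card of kernel of castHom
  have hc0 : Nat.card { x : ZMod (p ^ (k + 1)) // c x = 0 } = p ^ k := by
    have hq : Nat.card (ZMod (p ^ (k + 1))) =
        Nat.card (ZMod (p ^ (k + 1)) ⧸ c.toAddMonoidHom.ker) * Nat.card c.toAddMonoidHom.ker :=
      AddSubgroup.card_eq_card_quotient_mul_card_addSubgroup _
    have hquot : Nat.card (ZMod (p ^ (k + 1)) ⧸ c.toAddMonoidHom.ker) = Nat.card (ZMod p) :=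
      Nat.card_congr
        (QuotientAddGroup.quotientKerEquivOfSurjective c.toAddMonoidHom hcsurj).toEquiv
    rw [hquot, Nat.card_zmod, Nat.card_zmod] at hq
    have hker : Nat.card c.toAddMonoidHom.ker =
        Nat.card { x : ZMod (p ^ (k + 1)) // c x = 0 } := rfl
    rw [hker] at hq
    have h3 : p * p ^ k = p * Nat.card { x : ZMod (p ^ (k + 1)) // c x = 0 } := by
      rw [← hq, pow_succ, mul_comm]
    have := Nat.eq_of_mul_eq_mul_left hp.pos h3
    omega
  have hker : Nat.card F.ker = p ^ (4 * k) := by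
    rw [Nat.card_congr (e1.trans e2), Nat.card_fun, Nat.card_fun,
      Nat.card_eq_fintype_card (α := Fin 2), Fintype.card_fin, hc0]
    ring
  -- final count
  have hfinal := Subgroup.card_eq_card_quotient_mul_card_subgroup F.ker
  rw [Nat.card_congr (QuotientGroup.quotientKerEquivOfSurjective F hFsurj).toEquiv, hker] at hfinal
  rw [hfinal, Matrix.card_GL_field, ZMod.card, Fin.prod_univ_two]
  rw [Fin.val_zero, Fin.val_one, pow_zero, pow_one]
  ring

noncomputable def EP2.glMk {n : ℕ} (t : ZMod n × ZMod n × (ZMod n)ˣ) : GL (Fin 2) (ZMod n) :=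
  ((Matrix.isUnit_iff_isUnit_det _).mpr (show
      IsUnit (Matrix.det !![(t.2.2 : ZMod n) + t.1 * (t.2.1 * t.2.2), t.1; t.2.1 * t.2.2, 1]) by
    have hd : Matrix.det !![(t.2.2 : ZMod n) + t.1 * (t.2.1 * t.2.2), t.1;
        t.2.1 * t.2.2, 1] = (t.2.2 : ZMod n) := by
      rw [Matrix.det_fin_two_of]; ring
    rw [hd]; exact t.2.2.isUnit)).unit

lemma EP2.glMk_coe {n : ℕ} (t : ZMod n × ZMod n × (ZMod n)ˣ) :
    (EP2.glMk t : Matrix (Fin 2) (Fin 2) (ZMod n)) =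
      !![(t.2.2 : ZMod n) + t.1 * (t.2.1 * t.2.2), t.1; t.2.1 * t.2.2, 1] :=
  IsUnit.unit_spec _

lemma EP2.glMk_inj {n : ℕ} : Function.Injective (EP2.glMk (n := n)) := by
  rintro ⟨b, c, u⟩ ⟨b', c', u'⟩ h
  have hM := congrArg (fun g : GL (Fin 2) (ZMod n) => (g : Matrix (Fin 2) (Fin 2) (ZMod n))) h
  simp only [EP2.glMk_coe] at hM
  have h01 : b = b' := by
    have := congrFun (congrFun hM 0) 1; simpa using this
  have h10 : c * u = c' * u' := by
    have := congrFun (congrFun hM 1) 0; simpa using this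
  have h00 : (u : ZMod n) + b * (c * u) = (u' : ZMod n) + b' * (c' * u') := by
    have := congrFun (congrFun hM 0) 0; simpa using this
  have hu : (u : ZMod n) = (u' : ZMod n) := by
    rw [h01, h10] at h00
    exact add_right_cancel h00
  have huu : u = u' := Units.ext hu
  have hc : c = c' := by
    have h2 : c * (u' : ZMod n) * (u'⁻¹ : (ZMod n)ˣ) = c' * (u' : ZMod n) * (u'⁻¹ : (ZMod n)ˣ) := by
      rw [hu] at h10; rw [h10]
    rwa [mul_assoc, mul_assoc, Units.mul_inv, mul_one, mul_one] at h2
  simp [h01, hc, huu]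

lemma EP2.cardGL_lower (n : ℕ) [NeZero n] :
    n * n * Nat.totient n ≤ Nat.card (GL (Fin 2) (ZMod n)) := by
  have := Nat.card_le_card_of_injective _ (EP2.glMk_inj (n := n))
  rwa [Nat.card_prod, Nat.card_prod, Nat.card_zmod, Nat.card_eq_fintype_card,
    ZMod.card_units_eq_totient, ← mul_assoc] at this

lemma EP2.cardGL_one : Nat.card (GL (Fin 2) (ZMod 1)) = 1 := by
  haveI : Subsingleton (GL (Fin 2) (ZMod 1)) := by infer_instance
  exact Nat.card_eq_one_iff_unique.mpr ⟨inferInstance, inferInstance⟩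

/-- The summand as a function of `ℕ`. -/
noncomputable def EP2.f (n : ℕ) : ℝ :=
  (Nat.totient n : ℝ) / (Nat.card (GL (Fin 2) (ZMod n)) : ℝ)

namespace EP2

lemma f_zero : f 0 = 0 := by simp [f]

lemma f_one : f 1 = 1 := by simp [f, cardGL_one]

lemma f_mul {m n : ℕ} (h : Nat.Coprime m n) : f (m * n) = f m * f n := by
  rw [f, f, f, Nat.totient_mul h, cardGL_mul h, Nat.cast_mul, Nat.cast_mul, div_mul_div_comm]

lemma f_nonneg (n : ℕ) : 0 ≤ f n := div_nonneg (Nat.cast_nonneg _) (Nat.cast_nonneg _)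

lemma f_le (n : ℕ) : f n ≤ 1 / (n : ℝ) ^ 2 := by
  rcases Nat.eq_zero_or_pos n with rfl | hn
  · simp [f_zero]
  haveI : NeZero n := ⟨hn.ne'⟩
  have hφ : 0 < Nat.totient n := Nat.totient_pos.mpr hn
  have hb : (0 : ℝ) < (n : ℝ) * n * Nat.totient n := by positivity
  have hcard : ((n : ℝ) * n * Nat.totient n : ℝ) ≤ (Nat.card (GL (Fin 2) (ZMod n)) : ℝ) := by
    have := cardGL_lower n
    exact_mod_cast this
  have h1 : f n ≤ (Nat.totient n : ℝ) / ((n : ℝ) * n * Nat.totient n) :=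
    div_le_div_of_nonneg_left (Nat.cast_nonneg _) hb hcard
  refine h1.trans (le_of_eq ?_)
  have hn0 : (n : ℝ) ≠ 0 := Nat.cast_ne_zero.mpr hn.ne'
  have hφ0 : (Nat.totient n : ℝ) ≠ 0 := Nat.cast_ne_zero.mpr hφ.ne'
  field_simp

lemma f_norm_summable : Summable (fun n : ℕ => ‖f n‖) := by
  refine Summable.of_nonneg_of_le (fun n => norm_nonneg _) (fun n => ?_)
    ((Real.summable_one_div_nat_pow (p := 2)).mpr one_lt_two)
  rw [Real.norm_of_nonneg (f_nonneg n)]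
  exact f_le n

lemma f_primePow_succ {p : ℕ} (hp : p.Prime) (e : ℕ) :
    f (p ^ (e + 1)) =
      (1 / ((p : ℝ) * ((p : ℝ) ^ 2 - 1))) * (((p : ℝ) ^ 3)⁻¹) ^ e := by
  have h2 : 2 ≤ (p : ℝ) := by exact_mod_cast hp.two_le
  have hq0 : (0 : ℝ) < (p : ℝ) := by linarith
  have htot : Nat.totient (p ^ (e + 1)) = p ^ e * (p - 1) := by
    rw [Nat.totient_prime_pow hp (Nat.succ_pos e)]
    rfl
  rw [f, htot, cardGL_primePow hp e]
  have c1 : ((p ^ 2 - 1 : ℕ) : ℝ) = (p : ℝ) ^ 2 - 1 := by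
    have : 1 ≤ p ^ 2 := Nat.one_le_pow _ _ hp.pos
    push_cast [Nat.cast_sub this]; ring
  have c2 : ((p ^ 2 - p : ℕ) : ℝ) = (p : ℝ) ^ 2 - (p : ℝ) := by
    have : p ≤ p ^ 2 := by nlinarith [hp.two_le]
    push_cast [Nat.cast_sub this]; ring
  have c3 : ((p - 1 : ℕ) : ℝ) = (p : ℝ) - 1 := by
    push_cast [Nat.cast_sub hp.one_le]; ring
  push_cast [c1, c2, c3]
  have hx : (p : ℝ) ^ e ≠ 0 := pow_ne_zero _ hq0.ne'
  have h4e : (p : ℝ) ^ (4 * e) = ((p : ℝ) ^ e) ^ 4 := by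
    rw [mul_comm, pow_mul]
  have h3e : (((p : ℝ) ^ 3)⁻¹) ^ e = (((p : ℝ) ^ e) ^ 3)⁻¹ := by
    rw [← inv_pow, ← pow_mul, ← pow_mul, mul_comm, inv_pow]
  rw [h4e, h3e]
  have hq1 : (p : ℝ) ^ 2 - 1 ≠ 0 := by nlinarith
  have hq2 : (p : ℝ) ^ 2 - (p : ℝ) ≠ 0 := by nlinarith
  have hq3' : (p : ℝ) - 1 ≠ 0 := by linarith
  field_simp

lemma tsum_f_primes (p : Nat.Primes) :
    ∑' e : ℕ, f ((p : ℕ) ^ e) =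
      1 + ((p : ℕ) : ℝ) ^ 2 / ((((p : ℕ) : ℝ) ^ 2 - 1) * (((p : ℕ) : ℝ) ^ 3 - 1)) := by
  obtain ⟨p, hp⟩ := p
  simp only
  have h2 : 2 ≤ (p : ℝ) := by exact_mod_cast hp.two_le
  have hs : Summable (fun e : ℕ => f (p ^ e)) :=
    (f_norm_summable.of_norm).comp_injective (Nat.pow_right_injective hp.two_le)
  rw [hs.tsum_eq_zero_add, pow_zero, f_one]
  have hr0 : (0 : ℝ) ≤ ((p : ℝ) ^ 3)⁻¹ := by positivity
  have hr1 : ((p : ℝ) ^ 3)⁻¹ < 1 := by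
    rw [inv_lt_one_iff₀]
    right
    have h8 : (2:ℝ) ^ 3 ≤ (p:ℝ) ^ 3 := pow_le_pow_left₀ (by norm_num) h2 3
    norm_num at h8
    linarith
  have hgeo : ∑' e : ℕ, f (p ^ (e + 1)) =
      (1 / ((p : ℝ) * ((p : ℝ) ^ 2 - 1))) * (1 - ((p : ℝ) ^ 3)⁻¹)⁻¹ := by
    simp only [f_primePow_succ hp]
    rw [tsum_mul_left, tsum_geometric_of_lt_one hr0 hr1]
  rw [hgeo]
  have hq1 : (p : ℝ) ^ 2 - 1 ≠ 0 := by nlinarith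
  have hq3 : (p : ℝ) ^ 3 - 1 ≠ 0 := by
    have h8 : (2:ℝ) ^ 3 ≤ (p:ℝ) ^ 3 := pow_le_pow_left₀ (by norm_num) h2 3
    norm_num at h8
    intro h; linarith
  have hp0 : (p : ℝ) ≠ 0 := by linarith
  have hd : 1 - ((p : ℝ) ^ 3)⁻¹ ≠ 0 := by
    intro h
    apply hq3
    have : ((p : ℝ) ^ 3)⁻¹ = 1 := by linarith
    have h3 : (p : ℝ) ^ 3 = 1 := by
      field_simp at this; linarith
    linarith
  congr 1
  field_simp

end EP2

/-- The idealized constant `C_{d₁}`: the sum over all positive integers `m` of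
`φ(m)/|GL₂(ℤ/mℤ)|` equals the Euler product over primes `ℓ` of
`1 + ℓ²/((ℓ²−1)(ℓ³−1))`, and this product converges. -/
theorem stmt_2 :
    Multipliable (fun ℓ : Nat.Primes =>
      (1 + (ℓ : ℝ) ^ 2 / (((ℓ : ℝ) ^ 2 - 1) * ((ℓ : ℝ) ^ 3 - 1)))) ∧
    ∑' m : ℕ+, (Nat.totient m : ℝ) / (Nat.card (GL (Fin 2) (ZMod m)) : ℝ) =
      ∏' ℓ : Nat.Primes,
        (1 + (ℓ : ℝ) ^ 2 / (((ℓ : ℝ) ^ 2 - 1) * ((ℓ : ℝ) ^ 3 - 1))) := by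
  have hmul : ∀ {m n : ℕ}, Nat.Coprime m n → EP2.f (m * n) = EP2.f m * EP2.f n :=
    fun h => EP2.f_mul h
  have EP := EulerProduct.eulerProduct_hasProd EP2.f_one hmul EP2.f_norm_summable EP2.f_zero
  have hfun : (fun p : Nat.Primes => ∑' e : ℕ, EP2.f ((p : ℕ) ^ e)) =
      (fun ℓ : Nat.Primes =>
        (1 + (ℓ : ℝ) ^ 2 / (((ℓ : ℝ) ^ 2 - 1) * ((ℓ : ℝ) ^ 3 - 1)))) := by
    funext p
    exact EP2.tsum_f_primes p
  constructor
  · have := EP.multipliable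
    rwa [hfun] at this
  · have hlhs : ∑' m : ℕ+, EP2.f (m : ℕ) = ∑' n : ℕ, EP2.f n := by
      refine Function.Injective.tsum_eq (fun a b hab => PNat.coe_injective hab) ?_
      intro n hn
      rcases Nat.eq_zero_or_pos n with rfl | hpos
      · simp [EP2.f_zero] at hn
      · exact ⟨⟨n, hpos⟩, rfl⟩
    calc ∑' m : ℕ+, (Nat.totient m : ℝ) / (Nat.card (GL (Fin 2) (ZMod m)) : ℝ)
        = ∑' n : ℕ, EP2.f n := hlhs
      _ = ∏' p : Nat.Primes, ∑' e : ℕ, EP2.f ((p : ℕ) ^ e) := EP.tprod_eq.symm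
      _ = _ := by rw [hfun]
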